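/- The type D odd Demazure operator is square-zero: (∂_n^d)^2 = 0 as an operator on Pol_n^-. -/
import Mathlib


/-- The type D odd Demazure operator is square-zero: `(∂ₙᵈ)² = 0` on `Pol_n^-`. -/
theorem stmt_11 (n : ℕ) (R : Type*) [Ring R] (x : Fin (n + 2) → R)
    (hx : ∀ a b, a ≠ b → x a * x b + x b * x a = 0)
    (hgen : Subring.closure (Set.range x) = ⊤)
    (s : R →+* R)
    (hs1 : s (x (Fin.last (n + 1))) = x ((Fin.last n).castSucc))
    (hs2 : s (x ((Fin.last n).castSucc)) = x (Fin.last (n + 1)))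
    (hs3 : ∀ j, j ≠ Fin.last (n + 1) → j ≠ (Fin.last n).castSucc → s (x j) = - x j)
    (D : R →ₗ[ℤ] R) (hD1 : D 1 = 0)
    (hDn : D (x (Fin.last (n + 1))) = -1)
    (hDp : D (x ((Fin.last n).castSucc)) = 1)
    (hDj : ∀ j, j ≠ Fin.last (n + 1) → j ≠ (Fin.last n).castSucc → D (x j) = 0)
    (hL : ∀ f g, D (f * g) = D f * g + s f * D g) :
    ∀ f : R, D (D f) = 0 := by
  have key : ∀ f : R, D (s f) + s (D f) = 0 := by
    intro f
    have hf : f ∈ Subring.closure (Set.range x) := hgen ▸ Subring.mem_top f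
    induction hf using Subring.closure_induction with
    | mem y hy =>
      obtain ⟨j, rfl⟩ := hy
      by_cases h1 : j = Fin.last (n + 1)
      · subst h1; rw [hs1, hDp, hDn]; simp
      · by_cases h2 : j = (Fin.last n).castSucc
        · subst h2; rw [hs2, hDn, hDp]; simp
        · rw [hs3 j h1 h2, hDj j h1 h2]; simp [hDj j h1 h2]
    | zero => simp
    | one => simp [hD1]
    | add f g _ _ hf hg =>
      rw [map_add, map_add, map_add, map_add]
      calc D (s f) + D (s g) + (s (D f) + s (D g))
          = (D (s f) + s (D f)) + (D (s g) + s (D g)) := by abel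
        _ = 0 := by rw [hf, hg, add_zero]
    | neg f _ hf =>
      rw [map_neg, map_neg, map_neg, map_neg, ← neg_add, hf, neg_zero]
    | mul f g _ _ hf hg =>
      rw [map_mul, hL, hL, map_add, map_mul, map_mul]
      calc D (s f) * s g + s (s f) * D (s g) + (s (D f) * s g + s (s f) * s (D g))
          = (D (s f) + s (D f)) * s g + s (s f) * (D (s g) + s (D g)) := by noncomm_ring
        _ = 0 := by rw [hf, hg]; simp
  intro f
  have hf : f ∈ Subring.closure (Set.range x) := hgen ▸ Subring.mem_top f
  induction hf using Subring.closure_induction with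
  | mem y hy =>
    obtain ⟨j, rfl⟩ := hy
    by_cases h1 : j = Fin.last (n + 1)
    · subst h1; rw [hDn]; simp [hD1]
    · by_cases h2 : j = (Fin.last n).castSucc
      · subst h2; rw [hDp, hD1]
      · rw [hDj j h1 h2, map_zero]
  | zero => simp
  | one => simp [hD1]
  | add f g _ _ hf hg => rw [map_add, map_add, hf, hg, add_zero]
  | neg f _ hf => rw [map_neg, map_neg, hf, neg_zero]
  | mul f g _ _ hf hg =>
    rw [hL, map_add, hL, hL, hf, hg, zero_mul, mul_zero, zero_add, add_zero]
    calc s (D f) * D g + D (s f) * D g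
        = (D (s f) + s (D f)) * D g := by noncomm_ring
      _ = 0 := by rw [key f, zero_mul]
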